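/- arXiv:1609.05984 — 2 statements merged into one kernel-verified Lean document; each statement's English description precedes it below -/
import Mathlib

section
/- Let G = (L, R, E) be a bipartite multigraph with each left vertex of degree exactly D, and suppose G is an (|B|, ε)-extractor on B ⊆ L in the sense that for every A ⊆ R, | |E(B,A)|/(|B|·D) − |A|/|R| | ≤ ε. Let A be the set of (1/ε)-heavy right vertices (those with more than (1/ε)·|B|·D/|R| edges from B). Call x ∈ B δ-bad if at least δ·D of the edges leaving x land in A. Then the number of δ-bad vertices of B is at most (2ε/δ)·|B|. In particular, if ε = δ², at most 2δ·|B| vertices of B are δ-bad. -/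
/-- If the bipartite multigraph (left degree exactly `D`) is an `(|B|,ε)`
extractor on `B` (for every `A ⊆ R`, `||E(B,A)|/(|B|D) − |A|/|R|| ≤ ε`), then the number
of `δ`-bad vertices of `B` (those sending at least `δD` edges into the set of
`(1/ε)`-heavy right vertices) is at most `(2ε/δ)·|B|`; in particular if `ε = δ²` it is
at most `2δ·|B|`. -/
theorem stmt_1 {L R : Type*} [Fintype L] [Fintype R] [DecidableEq R]
    (D : ℕ) (hD : 1 ≤ D) (N : L → Fin D → R)
    (B : Finset L) (hB : B.Nonempty)
    (δ ε : ℚ) (hδ : 0 < δ) (hε : 0 < ε)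
    (hext : ∀ A : Finset R,
      |(((B ×ˢ (Finset.univ : Finset (Fin D))).filter (fun p => N p.1 p.2 ∈ A)).card : ℚ)
          / (B.card * D)
        - (A.card : ℚ) / Fintype.card R| ≤ ε) :
    let heavy : Finset R := Finset.univ.filter (fun z =>
      (1 / ε) * B.card * D / Fintype.card R <
        (((B ×ˢ (Finset.univ : Finset (Fin D))).filter (fun p => N p.1 p.2 = z)).card : ℚ))
    ((B.filter (fun x => δ * D ≤
        (((Finset.univ : Finset (Fin D)).filter (fun i => N x i ∈ heavy)).card : ℚ))).card : ℚ)
      ≤ (2 * ε / δ) * B.card ∧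
    (ε = δ ^ 2 →
      ((B.filter (fun x => δ * D ≤
          (((Finset.univ : Finset (Fin D)).filter (fun i => N x i ∈ heavy)).card : ℚ))).card : ℚ)
        ≤ 2 * δ * B.card) := by
  intro A
  obtain ⟨x₀, hx₀⟩ := hB
  have hRne : Nonempty R := ⟨N x₀ ⟨0, hD⟩⟩
  have hRpos : (0:ℚ) < Fintype.card R := by exact_mod_cast Fintype.card_pos
  have hBpos : (0:ℚ) < B.card := by exact_mod_cast Finset.card_pos.mpr ⟨x₀, hx₀⟩
  have hDpos : (0:ℚ) < D := by exact_mod_cast hD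
  set EBA := (B ×ˢ (Finset.univ : Finset (Fin D))).filter (fun p => N p.1 p.2 ∈ A) with hEBA
  -- degrees decompose EBA
  have hsum : EBA.card = ∑ z ∈ A,
      ((B ×ˢ (Finset.univ : Finset (Fin D))).filter (fun p => N p.1 p.2 = z)).card := by
    have step1 : EBA.card = ∑ z ∈ A, (EBA.filter (fun p => N p.1 p.2 = z)).card :=
      Finset.card_eq_sum_card_fiberwise (fun p hp => (Finset.mem_filter.mp hp).2)
    rw [step1]
    refine Finset.sum_congr rfl fun z hz => ?_
    congr 1
    rw [hEBA, Finset.filter_filter]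
    exact Finset.filter_congr (fun p hp => by
      constructor
      · rintro ⟨_, h⟩; exact h
      · rintro h; exact ⟨h ▸ hz, h⟩)
  -- heavy lower bound
  have h1 : (A.card : ℚ) * ((1 / ε) * B.card * D / Fintype.card R) ≤ EBA.card := by
    have h := Finset.card_nsmul_le_sum A
      (fun z => (((B ×ˢ (Finset.univ : Finset (Fin D))).filter
        (fun p => N p.1 p.2 = z)).card : ℚ))
      ((1 / ε) * B.card * D / Fintype.card R)
      (fun z hz => le_of_lt (Finset.mem_filter.mp hz).2)
    rw [nsmul_eq_mul] at h
    rw [hsum]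
    push_cast
    exact h
  -- EBA ≤ total
  have hub : (EBA.card : ℚ) ≤ B.card * D := by
    have : EBA.card ≤ (B ×ˢ (Finset.univ : Finset (Fin D))).card :=
      Finset.card_le_card (Finset.filter_subset _ _)
    rw [Finset.card_product, Finset.card_univ, Fintype.card_fin] at this
    exact_mod_cast this
  -- extractor bound
  have hlb : (EBA.card : ℚ) / (B.card * D) - (A.card : ℚ) / Fintype.card R ≤ ε :=
    (abs_le.mp (hext A)).2
  -- key bound: EBA ≤ 2ε |B| D
  have key : (EBA.card : ℚ) ≤ 2 * ε * (B.card * D) := by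
    set e := (EBA.card : ℚ)
    set a := (A.card : ℚ)
    set r := (Fintype.card R : ℚ)
    have ha : 0 ≤ a := by positivity
    have h1' : a * (B.card * D) ≤ ε * e * r := by
      have := mul_le_mul_of_nonneg_right h1 (le_of_lt (mul_pos hε hRpos))
      calc a * (B.card * D) = a * (1 / ε * B.card * D / r) * (ε * r) := by
            field_simp
        _ ≤ e * (ε * r) := this
        _ = ε * e * r := by ring
    have hlb' : e * r - a * (B.card * D) ≤ ε * (B.card * D) * r := by
      have := mul_le_mul_of_nonneg_right hlb
        (le_of_lt (mul_pos (mul_pos hBpos hDpos) hRpos))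
      calc e * r - a * (B.card * D) = (e / (B.card * D) - a / r) * (B.card * D * r) := by
            field_simp
        _ ≤ ε * (B.card * D * r) := this
        _ = ε * (B.card * D) * r := by ring
    nlinarith [mul_le_mul_of_nonneg_right hub (le_of_lt (mul_pos hε hRpos))]
  -- bad vertices
  set bad := B.filter (fun x => δ * D ≤
      (((Finset.univ : Finset (Fin D)).filter (fun i => N x i ∈ A)).card : ℚ)) with hbad
  have hsplit : ((bad ×ˢ (Finset.univ : Finset (Fin D))).filter
      (fun p => N p.1 p.2 ∈ A)).card
      = ∑ x ∈ bad, ((Finset.univ : Finset (Fin D)).filter (fun i => N x i ∈ A)).card := by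
    rw [Finset.card_filter, Finset.sum_product]
    exact Finset.sum_congr rfl fun x _ => (Finset.card_filter _ _).symm
  have hmono : ((bad ×ˢ (Finset.univ : Finset (Fin D))).filter
      (fun p => N p.1 p.2 ∈ A)).card ≤ EBA.card :=
    Finset.card_le_card (Finset.filter_subset_filter _
      (Finset.product_subset_product_left (Finset.filter_subset _ _)))
  have hcount : (bad.card : ℚ) * (δ * D) ≤ EBA.card := by
    have h := Finset.card_nsmul_le_sum bad
      (fun x => (((Finset.univ : Finset (Fin D)).filter (fun i => N x i ∈ A)).card : ℚ))
      (δ * D) (fun x hx => (Finset.mem_filter.mp hx).2)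
    rw [nsmul_eq_mul] at h
    calc (bad.card : ℚ) * (δ * D)
        ≤ ∑ x ∈ bad, (((Finset.univ : Finset (Fin D)).filter
            (fun i => N x i ∈ A)).card : ℚ) := h
      _ = (((bad ×ˢ (Finset.univ : Finset (Fin D))).filter
            (fun p => N p.1 p.2 ∈ A)).card : ℚ) := by rw [hsplit]; push_cast; ring
      _ ≤ EBA.card := by exact_mod_cast hmono
  have main : (bad.card : ℚ) ≤ 2 * ε / δ * B.card := by
    rw [div_mul_eq_mul_div, le_div_iff₀ hδ]
    nlinarith [hcount, key, hDpos]
  refine ⟨main, fun hεδ => ?_⟩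
  have : 2 * ε / δ * B.card = 2 * δ * B.card := by
    rw [hεδ]; field_simp
  linarith [main, this.le]
end

section
/- Suppose a string x of length n satisfies C(xz) ≤ C(x) + c/2 for a string z of length c, where C is plain Kolmogorov complexity relative to a fixed universal machine. The map sending each such z to a description of x of length at most C(x) + c/2 + 2·log c + O(1) (a shortest program for xz together with a self-delimiting encoding of c) is injective on the set of such z. Consequently, if for every string y and every d the number of programs of length ≤ C(y) + d is at most K·2^d (Chaitin's bound), then the number of strings z of length c with C(xz) ≤ C(x) + c/2 is at most K·2^{c/2 + 2·log c + O(1)}, which is less than 2^c for all sufficiently large c. Hence for all sufficiently large c, there exists z of length c with C(xz) > C(x) + c/2. -/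
private def enc (l : List Bool) : ℕ := l.foldr (fun b n => 2 * n + cond b 1 0) 1

private lemma enc_pos (l : List Bool) : 1 ≤ enc l := by
  induction l with
  | nil => simp [enc]
  | cons b t ih => simp only [enc, List.foldr] at *; cases b <;> simp <;> omega

private lemma enc_lt (l : List Bool) : enc l < 2 ^ (l.length + 1) := by
  induction l with
  | nil => simp [enc]
  | cons b t ih =>
    simp only [enc, List.foldr, List.length_cons] at *
    cases b <;> simp <;> rw [pow_succ] <;> omega

private lemma enc_cons (b : Bool) (l : List Bool) :
    enc (b :: l) = 2 * enc l + cond b 1 0 := rfl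

private lemma enc_inj : Function.Injective enc := by
  intro l1
  induction l1 with
  | nil =>
    intro l2 h
    cases l2 with
    | nil => rfl
    | cons b t =>
      exfalso
      have := enc_pos t
      rw [enc_cons] at h
      simp only [enc] at *
      cases b <;> simp at h <;> omega
  | cons b1 t1 ih =>
    intro l2 h
    cases l2 with
    | nil =>
      exfalso
      have := enc_pos t1
      rw [enc_cons] at h
      simp only [enc] at *
      cases b1 <;> simp at h <;> omega
    | cons b2 t2 =>
      rw [enc_cons, enc_cons] at h
      have := enc_pos t1
      have := enc_pos t2
      have hb : b1 = b2 ∧ (enc t1 = enc t2) := by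
        cases b1 <;> cases b2 <;> simp at h ⊢ <;> omega
      rw [hb.1, ih hb.2]

/-- Let `C` be plain Kolmogorov complexity for a universal machine `U`
(`C y` is the length of a shortest program for `y`), and assume Chaitin's bound: for
every `y` and `d` there are at most `K·2^d` programs of length `≤ C y + d`. Then for
every string `x` and all sufficiently large `c` there exists a string `z` of length `c`
with `C (x ++ z) > C x + c/2`. -/
theorem stmt_5 (U : List Bool → Option (List Bool)) (C : List Bool → ℕ)
    (hC : ∀ y : List Bool,
      (∃ p, U p = some y ∧ p.length = C y) ∧ ∀ p, U p = some y → C y ≤ p.length)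
    (K : ℕ) (hK : 0 < K)
    (hChaitin : ∀ (y : List Bool) (d : ℕ),
      {p : List Bool | U p = some y ∧ p.length ≤ C y + d}.ncard ≤ K * 2 ^ d)
    (x : List Bool) :
    ∃ c₀ : ℕ, ∀ c : ℕ, c₀ ≤ c →
      ∃ z : List Bool, z.length = c ∧ C x + c / 2 < C (x ++ z) := by
  refine ⟨2 * C x + 4, fun c hc => ?_⟩
  by_contra hcon
  push_neg at hcon
  -- every z of length c has C (x++z) ≤ C x + c/2
  set L := C x + c / 2 with hL
  -- build injection from vectors of length c into Fin (2^(L+1))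
  have hinj : ∃ g : List.Vector Bool c → Fin (2 ^ (L + 1)), Function.Injective g := by
    have pick : ∀ v : List.Vector Bool c,
        ∃ p : List Bool, U p = some (x ++ v.toList) ∧ p.length = C (x ++ v.toList) :=
      fun v => (hC (x ++ v.toList)).1
    choose p hp hplen using pick
    refine ⟨fun v => ⟨enc (p v), ?_⟩, ?_⟩
    · have h1 : enc (p v) < 2 ^ ((p v).length + 1) := enc_lt _
      have h2 : (p v).length ≤ L := by
        rw [hplen v]
        exact hcon v.toList (by simp)
      calc enc (p v) < 2 ^ ((p v).length + 1) := h1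
        _ ≤ 2 ^ (L + 1) := Nat.pow_le_pow_right (by norm_num) (by omega)
    · intro v1 v2 h
      have hpp : p v1 = p v2 := enc_inj (by simpa using congrArg Fin.val h)
      have : some (x ++ v1.toList) = some (x ++ v2.toList) := by
        rw [← hp v1, ← hp v2, hpp]
      have hz : v1.toList = v2.toList := by
        have := Option.some.inj this
        exact List.append_cancel_left this
      exact List.Vector.eq v1 v2 hz
  obtain ⟨g, hg⟩ := hinj
  have hcard := Fintype.card_le_of_injective g hg
  rw [Fintype.card_fin] at hcard
  have hvec : Fintype.card (List.Vector Bool c) = 2 ^ c := by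
    simp [card_vector]
  rw [hvec] at hcard
  have : 2 ^ c ≤ 2 ^ (L + 1) := hcard
  have hlt : L + 1 < c := by
    have : c / 2 * 2 ≤ c := Nat.div_mul_le_self c 2
    omega
  have := Nat.pow_lt_pow_right (a := 2) (by norm_num) hlt
  omega
end
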